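/- Let n > m ≥ 0 and define H(j,k) = (−1)^{b(j,k)} for j, k ∈ {0, …, 2ⁿ − 1}, where b(j,k) is the number of bit positions at which the binary expansions of j and k both have a 1. For 0 ≤ i ≤ 2^{n−m} − 1 and 0 ≤ r ≤ 2^m − 1, set e^i_r = (1/√(2ⁿ − 2^m)) · (H(j, i·2^m + r))_{2^m ≤ j ≤ 2ⁿ−1} ∈ ℝ^{2ⁿ−2^m}. Then for all i₁ ≠ i₂ and all r₁, r₂, ⟨e^{i₁}_{r₁}, e^{i₂}_{r₂}⟩ = −(2^m/(2ⁿ − 2^m)) · δ_{r₁,r₂}. -/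

import Mathlib

open scoped InnerProductSpace

noncomputable def epsW (k : ℕ) : ℝ := (-1 : ℝ) ^ (k.bits.count true)

lemma epsW_zero : epsW 0 = 1 := by simp [epsW, Nat.zero_bits]

lemma epsW_two_mul (x : ℕ) : epsW (2 * x) = epsW x := by
  rcases eq_or_ne x 0 with h | h
  · simp [h]
  · rw [epsW, Nat.bit0_bits x h]
    simp [epsW, List.count_cons]

lemma epsW_two_mul_add_one (x : ℕ) : epsW (2 * x + 1) = -epsW x := by
  rw [epsW, Nat.bit1_bits]
  simp [epsW, List.count_cons, pow_succ]

lemma epsW_bit (x b : ℕ) (hb : b < 2) : epsW (2 * x + b) = (-1 : ℝ) ^ b * epsW x := by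
  interval_cases b
  · simpa using epsW_two_mul x
  · simpa using epsW_two_mul_add_one x

lemma land_two_mul (j K : ℕ) : (2 * j) &&& K = 2 * (j &&& (K / 2)) := by
  apply Nat.eq_of_testBit_eq
  intro t
  cases t with
  | zero =>
    simp [Nat.testBit_land, Nat.testBit_zero, Nat.mul_mod_right,
      Nat.mul_add_mod]
  | succ t =>
    have h1 : (2 * j) / 2 = j := by omega
    have h2 : (2 * (j &&& (K / 2))) / 2 = j &&& (K / 2) := by omega
    simp only [Nat.testBit_land]
    simp [Nat.testBit_succ, h1, h2, Nat.testBit_land]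

lemma land_two_mul_add_one (j K : ℕ) :
    (2 * j + 1) &&& K = 2 * (j &&& (K / 2)) + K % 2 := by
  apply Nat.eq_of_testBit_eq
  intro t
  cases t with
  | zero =>
    have h1 : (2 * j + 1) % 2 = 1 := by omega
    have h2 : (2 * (j &&& (K / 2)) + K % 2) % 2 = K % 2 := by omega
    simp [Nat.testBit_land, Nat.testBit_zero, h1, h2]
  | succ t =>
    have h1 : (2 * j + 1) / 2 = j := by omega
    have h2 : (2 * (j &&& (K / 2)) + K % 2) / 2 = j &&& (K / 2) := by omega
    simp only [Nat.testBit_land]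
    simp [Nat.testBit_succ, h1, h2, Nat.testBit_land]

lemma count_bits_eq (N : ℕ) : ∀ n < 2 ^ N,
    n.bits.count true = ∑ t ∈ Finset.range N, (n.testBit t).toNat := by
  induction N with
  | zero =>
    intro n hn
    interval_cases n
    simp [Nat.zero_bits]
  | succ N ih =>
    intro n hn
    have hstep : n.bits.count true = n % 2 + (n / 2).bits.count true := by
      rcases Nat.even_or_odd n with ⟨k, hk⟩ | ⟨k, hk⟩
      · rcases eq_or_ne k 0 with hk0 | hk0
        · subst hk0; simp_all [Nat.zero_bits]
        · have hn2 : n = 2 * k := by omega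
          rw [hn2, Nat.bit0_bits k hk0]
          have hd : (2 * k) / 2 = k := by omega
          have hm : (2 * k) % 2 = 0 := by omega
          rw [hd, hm]
          simp [List.count_cons]
      · have hn2 : n = 2 * k + 1 := by omega
        rw [hn2, Nat.bit1_bits]
        have hd : (2 * k + 1) / 2 = k := by omega
        have hm : (2 * k + 1) % 2 = 1 := by omega
        rw [hd, hm]
        simp [List.count_cons]
        omega
    have hlt : n / 2 < 2 ^ N := by
      have : (2 : ℕ) ^ (N + 1) = 2 * 2 ^ N := by ring
      omega
    rw [hstep, ih _ hlt, Finset.sum_range_succ']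
    have h0 : (n.testBit 0).toNat = n % 2 := by
      rw [Nat.testBit_zero]
      rcases Nat.mod_two_eq_zero_or_one n with h | h <;> simp [h]
    have hsucc : ∀ t, (n.testBit (t + 1)).toNat = ((n / 2).testBit t).toNat := by
      intro t; rw [Nat.testBit_succ]
    simp_rw [hsucc, h0]
    omega

lemma epsW_eq_prod (N n : ℕ) (h : n < 2 ^ N) :
    epsW n = ∏ t ∈ Finset.range N, (-1 : ℝ) ^ ((n.testBit t).toNat) := by
  rw [Finset.prod_pow_eq_pow_sum, epsW, count_bits_eq N n h]

lemma epsW_xor (N x y : ℕ) (hx : x < 2 ^ N) (hy : y < 2 ^ N) :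
    epsW (x ^^^ y) = epsW x * epsW y := by
  rw [epsW_eq_prod N _ (Nat.xor_lt_two_pow hx hy), epsW_eq_prod N x hx,
    epsW_eq_prod N y hy, ← Finset.prod_mul_distrib]
  refine Finset.prod_congr rfl fun t _ => ?_
  rw [Nat.testBit_xor]
  cases x.testBit t <;> cases y.testBit t <;> simp

lemma sum_range_two_mul (n : ℕ) (f : ℕ → ℝ) :
    ∑ j ∈ Finset.range (2 * n), f j = ∑ j ∈ Finset.range n, (f (2 * j) + f (2 * j + 1)) := by
  induction n with
  | zero => simp
  | succ n ih =>
    rw [show 2 * (n + 1) = 2 * n + 1 + 1 by ring, Finset.sum_range_succ,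
      Finset.sum_range_succ, Finset.sum_range_succ, ih]
    ring

lemma sum_epsW (N : ℕ) : ∀ K < 2 ^ N,
    ∑ j ∈ Finset.range (2 ^ N), epsW (j &&& K) = if K = 0 then (2 ^ N : ℝ) else 0 := by
  induction N with
  | zero =>
    intro K hK
    interval_cases K
    simp [epsW_zero]
  | succ N ih =>
    intro K hK
    have h2 : (2 : ℕ) ^ (N + 1) = 2 * 2 ^ N := by ring
    rw [h2, sum_range_two_mul]
    have hterm : ∀ j, epsW ((2 * j) &&& K) + epsW ((2 * j + 1) &&& K)
        = (1 + (-1 : ℝ) ^ (K % 2)) * epsW (j &&& (K / 2)) := by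
      intro j
      rw [land_two_mul, land_two_mul_add_one, epsW_two_mul,
        epsW_bit _ _ (Nat.mod_lt _ two_pos)]
      ring
    simp_rw [hterm]
    rw [← Finset.mul_sum, ih (K / 2) (by omega)]
    rcases Nat.mod_two_eq_zero_or_one K with h | h
    · rw [h]
      by_cases hK0 : K = 0
      · have : K / 2 = 0 := by omega
        rw [if_pos this, if_pos hK0]
        norm_num
        ring
      · have : K / 2 ≠ 0 := by omega
        rw [if_neg this, if_neg hK0]
        ring
    · rw [h, if_neg (show K ≠ 0 by omega)]
      norm_num

/-- `bitOverlap j k` is the number of bit positions at which the binary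
expansions of `j` and `k` both have a `1`. -/
def bitOverlap (j k : ℕ) : ℕ := (Nat.land j k).bits.count true

/-- Cross inner products between the orthonormal bases of distinct subspaces in
the Walsh–Hadamard fusion frame construction:
`⟪e^{i₁}_{r₁}, e^{i₂}_{r₂}⟫ = −(2^m/(2ⁿ − 2^m)) δ_{r₁ r₂}` for `i₁ ≠ i₂`. -/
theorem stmt_12 (n m : ℕ) (hmn : m < n)
    (e : Fin (2 ^ (n - m)) → Fin (2 ^ m) → EuclideanSpace ℝ (Fin (2 ^ n - 2 ^ m)))
    (he : ∀ (i : Fin (2 ^ (n - m))) (r : Fin (2 ^ m)) (j : Fin (2 ^ n - 2 ^ m)),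
      e i r j = (1 / Real.sqrt ((2 ^ n : ℝ) - 2 ^ m)) *
        (-1 : ℝ) ^ bitOverlap (j.val + 2 ^ m) (i.val * 2 ^ m + r.val)) :
    ∀ i₁ i₂ : Fin (2 ^ (n - m)), i₁ ≠ i₂ →
      ∀ r₁ r₂ : Fin (2 ^ m),
        ⟪e i₁ r₁, e i₂ r₂⟫_ℝ =
          -((2 ^ m : ℝ) / ((2 ^ n : ℝ) - 2 ^ m)) * (if r₁ = r₂ then 1 else 0) := by
  intro i₁ i₂ hi r₁ r₂
  have hpowmn : (2 : ℕ) ^ m < 2 ^ n := Nat.pow_lt_pow_right one_lt_two hmn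
  have hsplit : (2 : ℕ) ^ n = 2 ^ m + (2 ^ n - 2 ^ m) := by omega
  set d : ℝ := (2 ^ n : ℝ) - 2 ^ m with hd
  have hdpos : (0 : ℝ) < d := by
    rw [hd]
    have : ((2 : ℝ) ^ m) < 2 ^ n := by exact_mod_cast hpowmn
    linarith
  set A : ℕ := i₁.val * 2 ^ m + r₁.val with hA
  set B : ℕ := i₂.val * 2 ^ m + r₂.val with hB
  have hpow : (2 : ℕ) ^ (n - m) * 2 ^ m = 2 ^ n := by
    rw [← pow_add]; congr 1; omega
  have hbound : ∀ (i : Fin (2 ^ (n - m))) (r : Fin (2 ^ m)),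
      i.val * 2 ^ m + r.val < 2 ^ n := by
    intro i r
    calc i.val * 2 ^ m + r.val < (i.val + 1) * 2 ^ m := by
          rw [add_mul, one_mul]; exact Nat.add_lt_add_left r.isLt _
      _ ≤ 2 ^ (n - m) * 2 ^ m := Nat.mul_le_mul_right _ i.isLt
      _ = 2 ^ n := hpow
  have hAlt : A < 2 ^ n := hbound i₁ r₁
  have hBlt : B < 2 ^ n := hbound i₂ r₂
  set K : ℕ := A ^^^ B with hK
  have hKlt : K < 2 ^ n := Nat.xor_lt_two_pow hAlt hBlt
  have hABne : A ≠ B := by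
    intro h
    apply hi
    have hdiv : ∀ (i : Fin (2 ^ (n - m))) (r : Fin (2 ^ m)),
        (i.val * 2 ^ m + r.val) / 2 ^ m = i.val := by
      intro i r
      rw [add_comm, Nat.add_mul_div_right _ _ (Nat.two_pow_pos m),
        Nat.div_eq_of_lt r.isLt, zero_add]
    have := congrArg (· / 2 ^ m) h
    simp only [hA, hB] at this
    rw [hdiv i₁ r₁, hdiv i₂ r₂] at this
    exact Fin.ext this
  have hK0 : K ≠ 0 := fun h => hABne (xor_eq_zero_iff.mp h)
  set R : ℕ := r₁.val ^^^ r₂.val with hR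
  have hRlt : R < 2 ^ m := Nat.xor_lt_two_pow r₁.isLt r₂.isLt
  have hlowbit : ∀ t, t < m → K.testBit t = R.testBit t := by
    intro t ht
    have h1 : ∀ (i : Fin (2 ^ (n - m))) (r : Fin (2 ^ m)),
        (i.val * 2 ^ m + r.val).testBit t = r.val.testBit t := by
      intro i r
      rw [mul_comm, Nat.testBit_two_pow_mul_add _ r.isLt, if_pos ht]
    rw [hK, hR, hA, hB, Nat.testBit_xor, Nat.testBit_xor, h1 i₁ r₁, h1 i₂ r₂]
  have hlow : ∀ j, j < 2 ^ m → j &&& K = j &&& R := by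
    intro j hj
    apply Nat.eq_of_testBit_eq
    intro t
    rw [Nat.testBit_land, Nat.testBit_land]
    by_cases ht : t < m
    · rw [hlowbit t ht]
    · have : j.testBit t = false :=
        Nat.testBit_lt_two_pow
          (lt_of_lt_of_le hj (Nat.pow_le_pow_right (by norm_num) (by omega)))
      simp [this]
  have hsum : ∑ j ∈ Finset.range (2 ^ n - 2 ^ m), epsW ((j + 2 ^ m) &&& K)
      = -(if r₁ = r₂ then (2 ^ m : ℝ) else 0) := by
    have h0 := sum_epsW n K hKlt
    rw [if_neg hK0, hsplit, Finset.sum_range_add] at h0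
    have hlowsum : ∑ j ∈ Finset.range (2 ^ m), epsW (j &&& K)
        = if r₁ = r₂ then (2 ^ m : ℝ) else 0 := by
      rw [Finset.sum_congr rfl fun j hj => by
        rw [hlow j (Finset.mem_range.mp hj)]]
      rw [sum_epsW m R hRlt]
      congr 1
      simp only [hR, xor_eq_zero_iff, eq_iff_iff]
      exact ⟨fun h => Fin.ext h, fun h => congrArg Fin.val h⟩
    have hcomm : ∀ j, (2 ^ m + j) = j + 2 ^ m := fun j => by omega
    simp_rw [hcomm] at h0
    rw [hlowsum] at h0
    linarith
  rw [PiLp.inner_apply]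
  simp only [RCLike.inner_apply, conj_trivial]
  have hterm : ∀ j : Fin (2 ^ n - 2 ^ m),
      (e i₁ r₁) j * (e i₂ r₂) j = (1 / d) * epsW ((j.val + 2 ^ m) &&& K) := by
    intro j
    rw [he, he]
    have hxor : ((j.val + 2 ^ m) &&& A) ^^^ ((j.val + 2 ^ m) &&& B)
        = (j.val + 2 ^ m) &&& K := (Nat.and_xor_distrib_left).symm
    have hmul : epsW ((j.val + 2 ^ m) &&& K)
        = epsW ((j.val + 2 ^ m) &&& A) * epsW ((j.val + 2 ^ m) &&& B) := by
      rw [← hxor]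
      exact epsW_xor n _ _ (lt_of_le_of_lt Nat.and_le_right hAlt)
        (lt_of_le_of_lt Nat.and_le_right hBlt)
    have key : ∀ a b : ℕ, (-1 : ℝ) ^ bitOverlap a b = epsW (a &&& b) := fun a b => rfl
    rw [key, key, ← hA, ← hB, hmul]
    have hs : Real.sqrt d * Real.sqrt d = d := Real.mul_self_sqrt hdpos.le
    field_simp
    rw [Real.sq_sqrt hdpos.le]; ring
  rw [Fintype.sum_congr _ _ (fun j => (mul_comm _ _).trans (hterm j))]
  rw [Fin.sum_univ_eq_sum_range (fun j => (1 / d) * epsW ((j + 2 ^ m) &&& K)) (2 ^ n - 2 ^ m)]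
  rw [← Finset.mul_sum, hsum]
  by_cases hr : r₁ = r₂ <;> simp [hr] <;> field_simp
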